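/- Let K_{t_1,...,t_s} be the complete multipartite graph with exactly one part U_i of each size t_i, where t_1 > t_2 > ... > t_s ≥ 2 and s ≥ 2. Let X consist of exactly one vertex from each part U_i. Then every eigenvalue of the adjacency matrix of the signed graph obtained from K_{t_1,...,t_s} by switching about X is a main eigenvalue. -/

import Mathlib

open Matrix

/-- The signed adjacency matrix obtained from the matrix `A` by switching about the
vertex set `X`: entry `(i,j)` is multiplied by `-1` exactly when one of `i, j` lies in `X`. -/
def switchMatrix {m : Type*} [DecidableEq m] (X : Finset m) (A : Matrix m m ℝ) :
    Matrix m m ℝ :=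
  fun i j => (if i ∈ X then (-1 : ℝ) else 1) * A i j * (if j ∈ X then (-1 : ℝ) else 1)

/-- The complete multipartite graph `K_{t_1, …, t_s}` with exactly one part `U_i` of each
size `t i`; its vertices are pairs `⟨i, a⟩` with `a : Fin (t i)`. -/
def cmGraph1 {s : ℕ} (t : Fin s → ℕ) : SimpleGraph ((i : Fin s) × Fin (t i)) :=
  SimpleGraph.completeMultipartiteGraph (fun i : Fin s => Fin (t i))

instance cm1Decidable {s : ℕ} (t : Fin s → ℕ) : DecidableRel (cmGraph1 t).Adj :=
  fun a b => inferInstanceAs (Decidable (a.1 ≠ b.1))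

/-- Computation of the switched adjacency matrix applied to a vector, entrywise. -/
lemma key {s : ℕ} (t : Fin s → ℕ) (X : Finset ((i : Fin s) × Fin (t i)))
    (v : ((i : Fin s) × Fin (t i)) → ℝ) (i : Fin s) (a : Fin (t i)) :
    (switchMatrix X ((cmGraph1 t).adjMatrix ℝ)).mulVec v ⟨i, a⟩
      = (if (⟨i, a⟩ : (i : Fin s) × Fin (t i)) ∈ X then (-1 : ℝ) else 1)
        * ((∑ j, ∑ b, (if (⟨j, b⟩ : (i : Fin s) × Fin (t i)) ∈ X then (-1 : ℝ) else 1) * v ⟨j, b⟩)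
           - ∑ b, (if (⟨i, b⟩ : (i : Fin s) × Fin (t i)) ∈ X then (-1 : ℝ) else 1) * v ⟨i, b⟩) := by
  classical
  simp only [mulVec, dotProduct, switchMatrix]
  rw [← Finset.univ_sigma_univ, Finset.sum_sigma]
  have hadj : ∀ (j : Fin s) (b : Fin (t j)),
      ((cmGraph1 t).adjMatrix ℝ) ⟨i, a⟩ ⟨j, b⟩ = if i = j then 0 else 1 := by
    intro j b
    by_cases h : i = j <;> simp [cmGraph1, SimpleGraph.adjMatrix, h]
  have h1 : ∀ j : Fin s, ∑ b : Fin (t j),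
      (if (⟨i, a⟩ : (i : Fin s) × Fin (t i)) ∈ X then (-1:ℝ) else 1)
        * ((cmGraph1 t).adjMatrix ℝ) ⟨i, a⟩ ⟨j, b⟩
        * (if (⟨j, b⟩ : (i : Fin s) × Fin (t i)) ∈ X then (-1:ℝ) else 1) * v ⟨j, b⟩
      = (if (⟨i, a⟩ : (i : Fin s) × Fin (t i)) ∈ X then (-1:ℝ) else 1)
        * ((∑ b, (if (⟨j, b⟩ : (i : Fin s) × Fin (t i)) ∈ X then (-1:ℝ) else 1) * v ⟨j, b⟩)
           - if i = j then (∑ b, (if (⟨j, b⟩ : (i : Fin s) × Fin (t i)) ∈ X then (-1:ℝ) else 1) * v ⟨j, b⟩) else 0) := by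
    intro j
    have hAdj : ∀ b : Fin (t j), (cmGraph1 t).Adj ⟨i, a⟩ ⟨j, b⟩ ↔ ¬ (i = j) := fun b => Iff.rfl
    by_cases h : i = j <;> simp [SimpleGraph.adjMatrix_apply, hAdj, h, Finset.mul_sum]
  rw [Finset.sum_congr rfl (fun j _ => h1 j)]
  rw [← Finset.mul_sum, Finset.sum_sub_distrib, Finset.sum_ite_eq]
  simp

/-- The core real-arithmetic lemma: under the size hypotheses, a "quotient eigenvector"
cannot be orthogonal to the switched all-ones vector. -/
lemma core {s : ℕ} (hs : 2 ≤ s) (tr : Fin s → ℝ) (μ : ℝ) (c : Fin s → ℝ)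
    (ht2 : ∀ i, (2:ℝ) ≤ tr i) (ht0 : (3:ℝ) ≤ tr ⟨0, by omega⟩)
    (htinj : ∀ i j : Fin s, i ≠ j → tr i ≠ tr j)
    (heq : ∀ i, (μ + tr i) * c i = ∑ j, tr j * c j)
    (hc : ∃ i, c i ≠ 0) :
    ∑ i, (tr i - 2) * c i ≠ 0 := by
  classical
  set S := ∑ j, tr j * c j with hS
  have hSne : S ≠ 0 := by
    intro h0
    obtain ⟨i, hci⟩ := hc
    have hμi : μ = -tr i := by
      have h := heq i; rw [h0] at h
      rcases mul_eq_zero.1 h with h' | h'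
      · linarith
      · exact absurd h' hci
    have hcj : ∀ j, j ≠ i → c j = 0 := by
      intro j hj
      have h := heq j; rw [h0, hμi] at h
      have hne : -tr i + tr j ≠ 0 := by
        intro h'; exact htinj j i hj (by linarith)
      exact (mul_eq_zero.1 h).resolve_left hne
    have hSi : S = tr i * c i := by
      rw [hS]
      exact Finset.sum_eq_single i (fun j _ hj => by rw [hcj j hj, mul_zero])
        (fun h => absurd (Finset.mem_univ i) h)
    rw [h0] at hSi
    rcases mul_eq_zero.1 hSi.symm with h' | h'
    · linarith [ht2 i]
    · exact hci h'
  intro hT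
  have hsum_c : ∑ i, c i = S / 2 := by
    have h1 : ∑ i, (tr i - 2) * c i = S - 2 * ∑ i, c i := by
      rw [hS, Finset.mul_sum, ← Finset.sum_sub_distrib]
      exact Finset.sum_congr rfl (fun i _ => by ring)
    rw [hT] at h1; linarith
  have hcard : (Finset.univ : Finset (Fin s)).card = s := by simp
  have hμval : μ = 2 * ((s : ℝ) - 1) := by
    have h2 : ∑ i, (μ + tr i) * c i = (s : ℝ) * S := by
      rw [Finset.sum_congr rfl (fun i _ => heq i), Finset.sum_const, hcard, nsmul_eq_mul]
    have h3 : ∑ i, (μ + tr i) * c i = μ * (S / 2) + S := by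
      have h4 : ∑ i, (μ + tr i) * c i = μ * (∑ i, c i) + ∑ i, tr i * c i := by
        rw [Finset.mul_sum, ← Finset.sum_add_distrib]
        exact Finset.sum_congr rfl (fun i _ => by ring)
      rw [h4, hsum_c, ← hS]
    have h5 : μ * (S / 2) = ((s : ℝ) - 1) * S := by linarith
    have h6 : μ * S = (2 * ((s : ℝ) - 1)) * S := by linarith
    exact mul_right_cancel₀ hSne h6
  have hd : ∀ i, μ + tr i ≠ 0 := by
    intro i h
    apply hSne; rw [← heq i, h, zero_mul]
  have hci : ∀ i, c i = S / (μ + tr i) := by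
    intro i
    exact (eq_div_iff (hd i)).2 (by rw [mul_comm]; exact heq i)
  have hspos : (0:ℝ) < (s : ℝ) := by
    have : (2:ℝ) ≤ (s : ℝ) := by exact_mod_cast hs
    linarith
  have hkey : ∑ i, 1 / (μ + tr i) = 1 / 2 := by
    have h7 : ∑ i, S * (1 / (μ + tr i)) = S * (1 / 2) := by
      have : ∀ i : Fin s, S * (1 / (μ + tr i)) = c i := by
        intro i; rw [hci i]; ring
      rw [Finset.sum_congr rfl (fun i _ => this i), hsum_c]; ring
    rw [← Finset.mul_sum] at h7
    exact mul_left_cancel₀ hSne h7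
  have hbound : ∀ i : Fin s, 1 / (μ + tr i) ≤ 1 / (2 * (s : ℝ)) := by
    intro i
    have h1 : 2 * (s : ℝ) ≤ μ + tr i := by rw [hμval]; linarith [ht2 i]
    exact one_div_le_one_div_of_le (by positivity) h1
  have hstrict : 1 / (μ + tr ⟨0, by omega⟩) < 1 / (2 * (s : ℝ)) := by
    have h1 : 2 * (s : ℝ) < μ + tr ⟨0, by omega⟩ := by rw [hμval]; linarith [ht0]
    exact one_div_lt_one_div_of_lt (by positivity) h1
  have hlt : ∑ i, 1 / (μ + tr i) < ∑ _i : Fin s, 1 / (2 * (s : ℝ)) :=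
    Finset.sum_lt_sum (fun i _ => hbound i) ⟨⟨0, by omega⟩, Finset.mem_univ _, hstrict⟩
  rw [hkey, Finset.sum_const, hcard, nsmul_eq_mul] at hlt
  have : (s : ℝ) * (1 / (2 * (s : ℝ))) = 1 / 2 := by
    field_simp
  rw [this] at hlt
  exact lt_irrefl _ hlt

/-- For a nonzero eigenvalue, every eigenvector of the switched matrix is (up to the
switching signs) constant on parts, with coefficients satisfying the quotient system. -/
lemma decomp {s : ℕ} (t : Fin s → ℕ) (X : Finset ((i : Fin s) × Fin (t i)))
    (x : (i : Fin s) → Fin (t i))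
    (hmem : ∀ (j : Fin s) (b : Fin (t j)), ((⟨j, b⟩ : (i : Fin s) × Fin (t i)) ∈ X) ↔ b = x j)
    (v : ((i : Fin s) × Fin (t i)) → ℝ) (μ : ℝ) (hμ : μ ≠ 0)
    (hvE : (switchMatrix X ((cmGraph1 t).adjMatrix ℝ)).mulVec v = μ • v) :
    ∃ c : Fin s → ℝ, (∀ (j : Fin s) (b : Fin (t j)), v ⟨j, b⟩ = (if b = x j then (-1:ℝ) else 1) * c j) ∧
      (∀ i, (μ + (t i : ℝ)) * c i = ∑ j, (t j : ℝ) * c j) := by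
  classical
  set c : Fin s → ℝ := fun j =>
    ((∑ k, ∑ b, (if (⟨k, b⟩ : (i : Fin s) × Fin (t i)) ∈ X then (-1:ℝ) else 1) * v ⟨k, b⟩)
      - ∑ b, (if (⟨j, b⟩ : (i : Fin s) × Fin (t i)) ∈ X then (-1:ℝ) else 1) * v ⟨j, b⟩) / μ with hc
  have hv1 : ∀ (j : Fin s) (b : Fin (t j)),
      v ⟨j, b⟩ = (if (⟨j, b⟩ : (i : Fin s) × Fin (t i)) ∈ X then (-1:ℝ) else 1) * c j := by
    intro j b
    have h1 := congrFun hvE ⟨j, b⟩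
    rw [key] at h1
    rw [Pi.smul_apply, smul_eq_mul] at h1
    rw [hc]
    rw [mul_div_assoc', h1]
    rw [mul_div_cancel_left₀ _ hμ]
  have hTj : ∀ j : Fin s,
      (∑ b, (if (⟨j, b⟩ : (i : Fin s) × Fin (t i)) ∈ X then (-1:ℝ) else 1) * v ⟨j, b⟩)
        = (t j : ℝ) * c j := by
    intro j
    have h2 : ∀ b : Fin (t j),
        (if (⟨j, b⟩ : (i : Fin s) × Fin (t i)) ∈ X then (-1:ℝ) else 1) * v ⟨j, b⟩ = c j := by
      intro b
      rw [hv1 j b, ← mul_assoc]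
      split <;> ring
    rw [Finset.sum_congr rfl (fun b _ => h2 b), Finset.sum_const]
    simp [mul_comm]
  refine ⟨c, ?_, ?_⟩
  · intro j b
    rw [hv1 j b]
    simp only [hmem]
  · intro i
    have hSc : (∑ k, ∑ b, (if (⟨k, b⟩ : (i : Fin s) × Fin (t i)) ∈ X then (-1:ℝ) else 1) * v ⟨k, b⟩)
        = ∑ j, (t j : ℝ) * c j := Finset.sum_congr rfl (fun k _ => hTj k)
    have hci : c i = ((∑ k, ∑ b, (if (⟨k, b⟩ : (i : Fin s) × Fin (t i)) ∈ X then (-1:ℝ) else 1) * v ⟨k, b⟩)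
        - ∑ b, (if (⟨i, b⟩ : (i : Fin s) × Fin (t i)) ∈ X then (-1:ℝ) else 1) * v ⟨i, b⟩) / μ := rfl
    rw [hSc, hTj i] at hci
    rw [eq_div_iff hμ] at hci
    linarith [hci]

theorem stmt13 {s : ℕ} (hs : 2 ≤ s) (t : Fin s → ℕ)
    (hanti : ∀ i j : Fin s, i < j → t j < t i)
    (hts : 2 ≤ t ⟨s - 1, by omega⟩)
    (x : (i : Fin s) → Fin (t i))
    (X : Finset ((i : Fin s) × Fin (t i)))
    (hX : X = Finset.univ.image (fun i : Fin s => (⟨i, x i⟩ : (i : Fin s) × Fin (t i)))) :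
    ∀ μ : ℝ,
      (∃ v : ((i : Fin s) × Fin (t i)) → ℝ, v ≠ 0 ∧
        (switchMatrix X ((cmGraph1 t).adjMatrix ℝ)).mulVec v = μ • v) →
      (∃ v : ((i : Fin s) × Fin (t i)) → ℝ, v ≠ 0 ∧
        (switchMatrix X ((cmGraph1 t).adjMatrix ℝ)).mulVec v = μ • v ∧ ∑ u, v u ≠ 0) := by
  classical
  intro μ hex
  obtain ⟨v, hv0, hvE⟩ := hex
  have hs1 : 0 < s := by omega
  have hmem : ∀ (j : Fin s) (b : Fin (t j)),
      ((⟨j, b⟩ : (i : Fin s) × Fin (t i)) ∈ X) ↔ b = x j := by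
    intro j b
    subst hX
    simp only [Finset.mem_image, Finset.mem_univ, true_and, Sigma.mk.inj_iff]
    constructor
    · rintro ⟨i, hi, hb⟩
      subst hi
      exact (eq_of_heq hb).symm
    · intro h
      exact ⟨j, rfl, heq_of_eq h.symm⟩
  have ht2 : ∀ i : Fin s, 2 ≤ t i := by
    intro i
    by_cases h : (i : ℕ) = s - 1
    · have : i = ⟨s - 1, by omega⟩ := Fin.ext h
      rw [this]; exact hts
    · have hlt : i < (⟨s - 1, by omega⟩ : Fin s) := by
        rw [Fin.lt_def]
        have := i.isLt
        simp only []
        omega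
      have := hanti i _ hlt
      omega
  have ht0 : 3 ≤ t ⟨0, hs1⟩ := by
    have hlt : (⟨0, hs1⟩ : Fin s) < (⟨s - 1, by omega⟩ : Fin s) := by
      rw [Fin.lt_def]; simp only []; omega
    have := hanti _ _ hlt
    omega
  by_cases hμ : μ = 0
  · -- explicit positive kernel vector
    subst hμ
    set w : ((i : Fin s) × Fin (t i)) → ℝ :=
      fun u => if u.2 = x u.1 then ((t u.1 : ℝ) - 1) else 1 with hw
    have hpos : ∀ u : (i : Fin s) × Fin (t i), 0 < w u := by
      intro u
      rw [hw]
      dsimp only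
      split
      · have h2 : (2:ℝ) ≤ ((t u.1 : ℕ) : ℝ) := by exact_mod_cast ht2 u.1
        linarith
      · exact one_pos
    have hTzero : ∀ j : Fin s,
        (∑ b, (if (⟨j, b⟩ : (i : Fin s) × Fin (t i)) ∈ X then (-1:ℝ) else 1) * w ⟨j, b⟩) = 0 := by
      intro j
      have hterm : ∀ b : Fin (t j),
          (if (⟨j, b⟩ : (i : Fin s) × Fin (t i)) ∈ X then (-1:ℝ) else 1) * w ⟨j, b⟩
            = 1 + (if b = x j then -((t j : ℕ) : ℝ) else 0) := by
        intro b
        rw [hw]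
        simp only [hmem]
        split <;> ring
      rw [Finset.sum_congr rfl (fun b _ => hterm b), Finset.sum_add_distrib,
        Finset.sum_const, Finset.sum_ite_eq' Finset.univ (x j)]
      simp
    refine ⟨w, ?_, ?_, ?_⟩
    · intro h
      exact ((hpos ⟨⟨0, hs1⟩, x ⟨0, hs1⟩⟩).ne') (congrFun h ⟨⟨0, hs1⟩, x ⟨0, hs1⟩⟩)
    · funext u
      obtain ⟨j, b⟩ := u
      have hz : (∑ k : Fin s, ∑ b : Fin (t k),
          (if (⟨k, b⟩ : (i : Fin s) × Fin (t i)) ∈ X then (-1:ℝ) else 1) * w ⟨k, b⟩) = 0 :=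
        Finset.sum_eq_zero (fun k _ => hTzero k)
      rw [key, hz, hTzero j]
      simp
    · have h1 : 0 < ∑ u, w u :=
        Finset.sum_pos (fun u _ => hpos u) ⟨⟨⟨0, hs1⟩, x ⟨0, hs1⟩⟩, Finset.mem_univ _⟩
      exact h1.ne'
  · -- nonzero eigenvalue: the given eigenvector already has nonzero sum
    obtain ⟨c, hv, heq⟩ := decomp t X x hmem v μ hμ hvE
    refine ⟨v, hv0, hvE, ?_⟩
    have hsum : ∑ u, v u = ∑ j, ((t j : ℝ) - 2) * c j := by
      rw [← Finset.univ_sigma_univ, Finset.sum_sigma]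
      refine Finset.sum_congr rfl (fun j _ => ?_)
      have hterm : ∀ b : Fin (t j),
          v ⟨j, b⟩ = c j + (if b = x j then (-2:ℝ) * c j else 0) := by
        intro b
        rw [hv j b]
        split <;> ring
      rw [Finset.sum_congr rfl (fun b _ => hterm b), Finset.sum_add_distrib,
        Finset.sum_const, Finset.sum_ite_eq' Finset.univ (x j)]
      simp
      ring
    rw [hsum]
    have hcne : ∃ i, c i ≠ 0 := by
      have hune : ∃ u, v u ≠ 0 := by
        by_contra h
        push_neg at h
        exact hv0 (funext fun u => h u)
      obtain ⟨⟨j, b⟩, hu⟩ := hune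
      refine ⟨j, fun h => hu ?_⟩
      rw [hv j b, h, mul_zero]
    have ht2' : ∀ i : Fin s, (2:ℝ) ≤ (t i : ℝ) := fun i => by exact_mod_cast ht2 i
    have ht0' : (3:ℝ) ≤ (t ⟨0, by omega⟩ : ℝ) := by exact_mod_cast ht0
    have htinj : ∀ i j : Fin s, i ≠ j → ((t i : ℝ)) ≠ ((t j : ℝ)) := by
      intro i j hij h
      have h' : t i = t j := by exact_mod_cast h
      rcases lt_or_gt_of_ne hij with hl | hl
      · have := hanti i j hl; omega
      · have := hanti j i hl; omega
    exact core hs (fun i => (t i : ℝ)) μ c ht2' ht0' htinj heq hcne
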